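/- Let S be a finite set with |S| = m, let t be an integer with 2 ≤ t ≤ m, let b assign a nonnegative real to every unordered pair of distinct elements of S, let w assign a nonnegative real to every element of S, and let K ≥ 0. Suppose that for every subset T ⊆ S with |T| = t one has ∑_{{u,v} ⊆ T} b({u,v}) ≤ K ∑_{v ∈ T} w(v). Then ∑_{{u,v} ⊆ S} b({u,v}) ≤ (m/(t−1)) · K · ∑_{v ∈ S} w(v). -/

import Mathlib

open Finset

lemma count_supersets {α : Type*} [DecidableEq α] (S A : Finset α) (t : ℕ)
    (hA : A ⊆ S) (hAt : A.card ≤ t) :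
    ((S.powersetCard t).filter (fun T => A ⊆ T)).card
      = (S.card - A.card).choose (t - A.card) := by
  rw [← card_sdiff_of_subset hA, ← Finset.card_powersetCard]
  apply Finset.card_bij (fun T _ => T \ A)
  · intro T hT
    simp only [mem_filter, mem_powersetCard] at hT
    obtain ⟨⟨hTS, hTc⟩, hAT⟩ := hT
    rw [mem_powersetCard]
    exact ⟨sdiff_subset_sdiff hTS (le_refl A), by rw [card_sdiff_of_subset hAT, hTc]⟩
  · intro T hT T' hT'
    simp only [mem_filter, mem_powersetCard] at hT hT'
    intro h
    have : T \ A ∪ A = T' \ A ∪ A := by rw [h]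
    rwa [sdiff_union_of_subset hT.2, sdiff_union_of_subset hT'.2] at this
  · intro U hU
    rw [mem_powersetCard] at hU
    refine ⟨U ∪ A, ?_, ?_⟩
    · simp only [mem_filter, mem_powersetCard]
      have hdisj : Disjoint U A := (subset_sdiff.mp hU.1).2
      refine ⟨⟨union_subset (hU.1.trans (sdiff_subset)) hA, ?_⟩, subset_union_right⟩
      rw [card_union_of_disjoint hdisj, hU.2]
      omega
    · rw [union_sdiff_right, sdiff_eq_self_of_disjoint (subset_sdiff.mp hU.1).2]

theorem total_benefit_bound {V : Type*} [DecidableEq V]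
    (S : Finset V) (m t : ℕ) (hm : S.card = m) (ht2 : 2 ≤ t) (htm : t ≤ m)
    (b : Sym2 V → ℝ) (hb : ∀ e, 0 ≤ b e)
    (w : V → ℝ) (hw : ∀ v, 0 ≤ w v)
    (K : ℝ) (hK : 0 ≤ K)
    (hyp : ∀ T ⊆ S, T.card = t →
      ∑ e ∈ T.sym2.filter (fun e => ¬ e.IsDiag), b e ≤ K * ∑ v ∈ T, w v) :
    ∑ e ∈ S.sym2.filter (fun e => ¬ e.IsDiag), b e ≤
      ((m : ℝ) / ((t : ℝ) - 1)) * K * ∑ v ∈ S, w v := by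
  classical
  set 𝒯 := S.powersetCard t with h𝒯
  set B := ∑ e ∈ S.sym2.filter (fun e => ¬ e.IsDiag), b e with hB
  set W := ∑ v ∈ S, w v with hW
  have hWnn : 0 ≤ W := Finset.sum_nonneg fun v _ => hw v
  have hBnn : 0 ≤ B := Finset.sum_nonneg fun e _ => hb e
  -- sum of hypothesis over all t-subsets
  have hsum : ∑ T ∈ 𝒯, ∑ e ∈ T.sym2.filter (fun e => ¬ e.IsDiag), b e
      ≤ K * ∑ T ∈ 𝒯, ∑ v ∈ T, w v := by
    rw [Finset.mul_sum]
    apply Finset.sum_le_sum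
    intro T hT
    rw [h𝒯, mem_powersetCard] at hT
    exact hyp T hT.1 hT.2
  -- LHS: edge double count
  have hLHS : ∑ T ∈ 𝒯, ∑ e ∈ T.sym2.filter (fun e => ¬ e.IsDiag), b e
      = ((m - 2).choose (t - 2) : ℝ) * B := by
    rw [Finset.sum_comm' (t' := S.sym2.filter (fun e => ¬ e.IsDiag))
      (s' := fun e => 𝒯.filter (fun T => e ∈ T.sym2))]
    · rw [hB, Finset.mul_sum]
      apply Finset.sum_congr rfl
      intro e he
      rw [Finset.sum_const, nsmul_eq_mul]
      congr 1
      simp only [mem_filter, mem_coe] at he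
      obtain ⟨heS, hed⟩ := he
      induction e using Sym2.ind with
      | _ u v =>
        have huv : u ≠ v := by simpa using hed
        have huS : u ∈ S := (Finset.mk_mem_sym2_iff.mp heS).1
        have hvS : v ∈ S := (Finset.mk_mem_sym2_iff.mp heS).2
        have : 𝒯.filter (fun T => s(u, v) ∈ T.sym2)
            = 𝒯.filter (fun T => ({u, v} : Finset V) ⊆ T) := by
          apply Finset.filter_congr
          intro T _
          simp [Finset.mk_mem_sym2_iff, Finset.insert_subset_iff]
        rw [this, h𝒯, count_supersets S {u, v} t (by
            simp [Finset.insert_subset_iff, huS, hvS])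
          (by rw [Finset.card_insert_of_notMem (by simpa using huv), card_singleton]; omega)]
        rw [Finset.card_insert_of_notMem (by simpa using huv), card_singleton, hm]
    · intro T e
      constructor
      · rintro ⟨hT, he⟩
        simp only [mem_filter] at he ⊢
        have hTS : T ⊆ S := (mem_powersetCard.mp hT).1
        exact ⟨⟨hT, he.1⟩, Finset.sym2_mono hTS he.1, he.2⟩
      · rintro ⟨hT, he⟩
        simp only [mem_filter] at hT he ⊢
        exact ⟨hT.1, hT.2, he.2⟩
  -- RHS: vertex double count
  have hRHS : ∑ T ∈ 𝒯, ∑ v ∈ T, w v = ((m - 1).choose (t - 1) : ℝ) * W := by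
    rw [Finset.sum_comm' (t' := S) (s' := fun v => 𝒯.filter (fun T => v ∈ T))]
    · rw [hW, Finset.mul_sum]
      apply Finset.sum_congr rfl
      intro v hv
      rw [Finset.sum_const, nsmul_eq_mul]
      congr 1
      have : 𝒯.filter (fun T => v ∈ T) = 𝒯.filter (fun T => ({v} : Finset V) ⊆ T) := by
        simp [Finset.singleton_subset_iff]
      rw [this, h𝒯, count_supersets S {v} t (by simpa using hv) (by simp; omega),
        card_singleton, hm]
    · intro T v
      constructor
      · rintro ⟨hT, hv⟩
        exact ⟨Finset.mem_filter.mpr ⟨hT, hv⟩, (mem_powersetCard.mp hT).1 hv⟩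
      · rintro ⟨hT, _⟩
        exact ⟨(Finset.mem_filter.mp hT).1, (Finset.mem_filter.mp hT).2⟩
  have key : ((m - 2).choose (t - 2) : ℝ) * B ≤ K * (((m - 1).choose (t - 1) : ℝ) * W) := by
    rw [← hLHS, ← hRHS]; exact hsum
  -- numerics
  have hc2pos : 0 < (m - 2).choose (t - 2) := Nat.choose_pos (by omega)
  have hident : (t - 1) * (m - 1).choose (t - 1) = (m - 1) * (m - 2).choose (t - 2) := by
    have := Nat.add_one_mul_choose_eq (m - 2) (t - 2)
    have h1 : (m - 2).succ = m - 1 := by omega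
    have h2 : (t - 2).succ = t - 1 := by omega
    rw [Nat.succ_eq_add_one] at h1 h2
    rw [h1, h2] at this
    rw [mul_comm]
    exact this.symm
  have ht1pos : (0 : ℝ) < (t : ℝ) - 1 := by
    have : (2 : ℝ) ≤ t := by exact_mod_cast ht2
    linarith
  have hc2pos' : (0 : ℝ) < ((m - 2).choose (t - 2) : ℝ) := by exact_mod_cast hc2pos
  have hidreal : ((t : ℝ) - 1) * ((m - 1).choose (t - 1) : ℝ)
      = ((m : ℝ) - 1) * ((m - 2).choose (t - 2) : ℝ) := by
    have h1 : ((t - 1 : ℕ) : ℝ) = (t : ℝ) - 1 := by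
      rw [Nat.cast_sub (by omega)]; norm_num
    have h2 : ((m - 1 : ℕ) : ℝ) = (m : ℝ) - 1 := by
      rw [Nat.cast_sub (by omega)]; norm_num
    rw [← h1, ← h2]
    exact_mod_cast hident
  set c1 : ℝ := ((m - 1).choose (t - 1) : ℝ)
  set c2 : ℝ := ((m - 2).choose (t - 2) : ℝ)
  have hc1nn : (0:ℝ) ≤ c1 := Nat.cast_nonneg _
  have h3 : ((t : ℝ) - 1) * B * c2 ≤ (m : ℝ) * K * W * c2 := by
    calc ((t : ℝ) - 1) * B * c2 = ((t : ℝ) - 1) * (c2 * B) := by ring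
      _ ≤ ((t : ℝ) - 1) * (K * (c1 * W)) := mul_le_mul_of_nonneg_left key ht1pos.le
      _ = (((t : ℝ) - 1) * c1) * (K * W) := by ring
      _ = (((m : ℝ) - 1) * c2) * (K * W) := by rw [hidreal]
      _ ≤ ((m : ℝ) * c2) * (K * W) := by
          apply mul_le_mul_of_nonneg_right _ (mul_nonneg hK hWnn)
          apply mul_le_mul_of_nonneg_right _ hc2pos'.le
          linarith
      _ = (m : ℝ) * K * W * c2 := by ring
  have h4 : ((t : ℝ) - 1) * B ≤ (m : ℝ) * K * W :=
    le_of_mul_le_mul_right (by linarith) hc2pos'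
  rw [div_mul_eq_mul_div, div_mul_eq_mul_div, le_div_iff₀ ht1pos]
  linarith
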